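/- Let O be a discrete valuation ring with maximal ideal 𝔪 and finite residue field of cardinality q, and let d ≥ 1. For every n ≥ 0, the average, over all diagonal d×d matrices a over O/𝔪^n, of |{x ∈ (O/𝔪^n)^d : x·a = 0}| equals (1 + n(1 - q^{-1}))^d (as a rational number). -/

import Mathlib

/-- The average size of the kernel of the elements of a set `N` of `m × n` matrices
over a commutative ring `S`, where matrices act on row vectors by right multiplication. -/
noncomputable def ask {S : Type*} [CommRing S] {m n : Type*} [Fintype m]
    (N : Set (Matrix m n S)) : ℚ :=
  (Nat.card N : ℚ)⁻¹ *
    ∑ᶠ a : N, (Nat.card {x : m → S | Matrix.vecMul x (a : Matrix m n S) = 0} : ℚ)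

namespace AskDiagonalAux

open IsLocalRing Ideal

variable {O : Type*} [CommRing O] [IsDomain O] [IsDiscreteValuationRing O]

lemma mem_mpow_iff {ϖ : O} (hϖ : Irreducible ϖ) (k : ℕ) (x : O) :
    x ∈ maximalIdeal O ^ k ↔ ϖ ^ k ∣ x := by
  rw [hϖ.maximalIdeal_eq, Ideal.span_singleton_pow, Ideal.mem_span_singleton]

/-- The image in `O/𝔪^n` of multiplication by `ϖ^j` is equipotent with `O/𝔪^(n-j)`. -/
lemma equiv_range {ϖ : O} (hϖ : Irreducible ϖ) {n j : ℕ} (hj : j ≤ n) :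
    Nonempty ({x : O ⧸ maximalIdeal O ^ n //
        ∃ y : O, Ideal.Quotient.mk (maximalIdeal O ^ n) (y * ϖ ^ j) = x} ≃
      (O ⧸ maximalIdeal O ^ (n - j))) := by
  set g : O →ₗ[O] O ⧸ maximalIdeal O ^ n :=
    (Submodule.mkQ (maximalIdeal O ^ n)) ∘ₗ (LinearMap.mulRight O (ϖ ^ j)) with hg
  have hker : LinearMap.ker g = maximalIdeal O ^ (n - j) := by
    ext x
    simp only [hg, LinearMap.mem_ker, LinearMap.comp_apply, LinearMap.mulRight_apply,
      Submodule.mkQ_apply, Submodule.Quotient.mk_eq_zero]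
    rw [mem_mpow_iff hϖ, mem_mpow_iff hϖ]
    constructor
    · intro h
      have h2 : ϖ ^ (n - j) * ϖ ^ j ∣ x * ϖ ^ j := by
        rwa [← pow_add, Nat.sub_add_cancel hj]
      exact (mul_dvd_mul_iff_right (pow_ne_zero j hϖ.ne_zero)).mp h2
    · intro h
      calc ϖ ^ n = ϖ ^ (n - j) * ϖ ^ j := by rw [← pow_add, Nat.sub_add_cancel hj]
      _ ∣ x * ϖ ^ j := mul_dvd_mul_right h _
  have hrange : (LinearMap.range g : Set (O ⧸ maximalIdeal O ^ n)) =
      {x | ∃ y : O, Ideal.Quotient.mk (maximalIdeal O ^ n) (y * ϖ ^ j) = x} := by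
    ext x
    simp only [SetLike.mem_coe, LinearMap.mem_range, Set.mem_setOf_eq, hg,
      LinearMap.comp_apply, LinearMap.mulRight_apply, Submodule.mkQ_apply]
    constructor
    · rintro ⟨y, rfl⟩; exact ⟨y, rfl⟩
    · rintro ⟨y, rfl⟩; exact ⟨y, rfl⟩
  have e1 : (O ⧸ maximalIdeal O ^ (n - j)) ≃ₗ[O] LinearMap.range g := by
    rw [← hker]; exact g.quotKerEquivRange
  refine ⟨(Equiv.setCongr hrange).symm.trans e1.toEquiv.symm⟩

lemma finite_card_quot [Finite (ResidueField O)] {ϖ : O} (hϖ : Irreducible ϖ) (m : ℕ) :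
    Finite (O ⧸ maximalIdeal O ^ m) ∧
      Nat.card (O ⧸ maximalIdeal O ^ m) = Nat.card (ResidueField O) ^ m := by
  induction m with
  | zero =>
    haveI : Subsingleton (O ⧸ maximalIdeal O ^ 0) :=
      Ideal.Quotient.subsingleton_iff.mpr (by rw [pow_zero, Ideal.one_eq_top])
    haveI : Unique (O ⧸ maximalIdeal O ^ 0) := Unique.mk' _
    exact ⟨Finite.of_subsingleton, by rw [Nat.card_unique, pow_zero]⟩
  | succ m ih =>
    obtain ⟨ihF, ihc⟩ := ih
    set π : O ⧸ maximalIdeal O ^ (m + 1) →+* O ⧸ maximalIdeal O ^ m :=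
      Ideal.Quotient.factor (Ideal.pow_le_pow_right (Nat.le_succ m)) with hπ
    have hπs : Function.Surjective π := by
      intro b
      obtain ⟨a, rfl⟩ := Ideal.Quotient.mk_surjective b
      exact ⟨Ideal.Quotient.mk _ a, Ideal.Quotient.factor_mk _ a⟩
    -- fiber over 0 is the image of 𝔪^m
    have hfib0 : {x : O ⧸ maximalIdeal O ^ (m + 1) | π x = 0} =
        {x | ∃ y : O, Ideal.Quotient.mk (maximalIdeal O ^ (m + 1)) (y * ϖ ^ m) = x} := by
      ext x
      obtain ⟨a, rfl⟩ := Ideal.Quotient.mk_surjective x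
      simp only [Set.mem_setOf_eq, hπ, Ideal.Quotient.factor_mk]
      rw [Ideal.Quotient.eq_zero_iff_mem, mem_mpow_iff hϖ]
      constructor
      · rintro ⟨y, rfl⟩
        exact ⟨y, by rw [Ideal.Quotient.mk_eq_mk_iff_sub_mem, mul_comm, sub_self]; exact zero_mem _⟩
      · rintro ⟨y, hy⟩
        rw [Ideal.Quotient.mk_eq_mk_iff_sub_mem, mem_mpow_iff hϖ] at hy
        obtain ⟨z, hz⟩ := hy
        exact ⟨y - ϖ * z, by linear_combination -hz⟩
    obtain ⟨e0⟩ := equiv_range hϖ (Nat.le_succ m)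
    have hres : (O ⧸ maximalIdeal O ^ (m + 1 - m)) = (O ⧸ maximalIdeal O ^ 1) := by
      norm_num
    have e1 : {x : O ⧸ maximalIdeal O ^ (m + 1) // π x = 0} ≃ ResidueField O := by
      refine ((Equiv.setCongr hfib0).trans e0).trans ?_
      have : maximalIdeal O ^ (m + 1 - m) = maximalIdeal O := by
        simp
      rw [this]
      exact Equiv.refl _
    haveI : Finite {x : O ⧸ maximalIdeal O ^ (m + 1) // π x = 0} := Finite.of_equiv _ e1.symm
    -- fibers over arbitrary points
    have efib : ∀ b : O ⧸ maximalIdeal O ^ m,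
        Nonempty ({x // π x = b} ≃ {x : O ⧸ maximalIdeal O ^ (m + 1) // π x = 0}) := by
      intro b
      obtain ⟨x₀, hx₀⟩ := hπs b
      refine ⟨⟨fun z => ⟨z.1 - x₀, by simp [map_sub, z.2, hx₀]⟩,
        fun z => ⟨z.1 + x₀, by simp [map_add, z.2, hx₀]⟩, ?_, ?_⟩⟩
      · intro z; ext; simp
      · intro z; ext; simp
    haveI : ∀ b : O ⧸ maximalIdeal O ^ m, Finite {x // π x = b} := fun b =>
      Finite.of_equiv _ (efib b).some.symm
    have esig : (O ⧸ maximalIdeal O ^ (m + 1)) ≃ Σ b : O ⧸ maximalIdeal O ^ m, {x // π x = b} :=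
      (Equiv.sigmaFiberEquiv π).symm
    haveI hF : Finite (O ⧸ maximalIdeal O ^ (m + 1)) := Finite.of_equiv _ esig.symm
    refine ⟨hF, ?_⟩
    classical
    letI := Fintype.ofFinite (O ⧸ maximalIdeal O ^ m)
    letI : ∀ b, Fintype {x // π x = b} := fun b => Fintype.ofFinite _
    have hcard : Nat.card (O ⧸ maximalIdeal O ^ (m + 1)) =
        ∑ b : O ⧸ maximalIdeal O ^ m, Nat.card {x // π x = b} := by
      rw [Nat.card_congr esig, Nat.card_eq_fintype_card, Fintype.card_sigma]
      simp [Nat.card_eq_fintype_card]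
    rw [hcard]
    have hcfib : ∀ b : O ⧸ maximalIdeal O ^ m,
        Nat.card {x // π x = b} = Nat.card (ResidueField O) := fun b =>
      (Nat.card_congr (efib b).some).trans (Nat.card_congr e1)
    simp only [hcfib]
    rw [Finset.sum_const, Finset.card_univ, ← Nat.card_eq_fintype_card, ihc, smul_eq_mul]
    ring

lemma ann_card {ϖ : O} (hϖ : Irreducible ϖ) {n k : ℕ} (hk : k ≤ n) {b : O} (hb : IsUnit b) :
    Nat.card {x : O ⧸ maximalIdeal O ^ n |
        x * Ideal.Quotient.mk (maximalIdeal O ^ n) (ϖ ^ k * b) = 0} =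
      Nat.card (O ⧸ maximalIdeal O ^ k) := by
  have hset : {x : O ⧸ maximalIdeal O ^ n |
        x * Ideal.Quotient.mk (maximalIdeal O ^ n) (ϖ ^ k * b) = 0} =
      {x | ∃ y : O, Ideal.Quotient.mk (maximalIdeal O ^ n) (y * ϖ ^ (n - k)) = x} := by
    ext x
    obtain ⟨a, rfl⟩ := Ideal.Quotient.mk_surjective x
    simp only [Set.mem_setOf_eq]
    rw [← _root_.map_mul, Ideal.Quotient.eq_zero_iff_mem, mem_mpow_iff hϖ]
    have hpow : ϖ ^ (n - k) * ϖ ^ k = ϖ ^ n := by rw [← pow_add]; congr 1; omega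
    constructor
    · intro h
      have h1 : ϖ ^ n ∣ a * ϖ ^ k := (hb.dvd_mul_right).mp (by rwa [← mul_assoc] at h)
      have h2 : ϖ ^ (n - k) * ϖ ^ k ∣ a * ϖ ^ k := by rwa [hpow]
      obtain ⟨y, hy⟩ := (mul_dvd_mul_iff_right (pow_ne_zero k hϖ.ne_zero)).mp h2
      refine ⟨y, ?_⟩
      rw [Ideal.Quotient.mk_eq_mk_iff_sub_mem]
      refine (mem_mpow_iff hϖ n _).mpr ⟨0, ?_⟩
      linear_combination -hy
    · rintro ⟨y, hy⟩
      rw [Ideal.Quotient.mk_eq_mk_iff_sub_mem, mem_mpow_iff hϖ] at hy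
      obtain ⟨z, hz⟩ := hy
      refine ⟨y * b - ϖ ^ k * z * b, ?_⟩
      linear_combination (-(ϖ ^ k * b)) * hz + (y * b) * hpow
  rw [hset]
  have := (equiv_range hϖ (Nat.sub_le n k)).some
  rw [Nat.sub_sub_self hk] at this
  exact Nat.card_congr this

lemma exists_val {ϖ : O} (hϖ : Irreducible ϖ) {n : ℕ} (c : O ⧸ maximalIdeal O ^ n) :
    ∃ m, m ≤ n ∧ (∃ b : O, IsUnit b ∧ c = Ideal.Quotient.mk (maximalIdeal O ^ n) (ϖ ^ m * b)) ∧
      ∀ j ≤ n, ((∃ y : O, Ideal.Quotient.mk (maximalIdeal O ^ n) (y * ϖ ^ j) = c) ↔ j ≤ m) := by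
  obtain ⟨a, rfl⟩ := Ideal.Quotient.mk_surjective c
  by_cases ha : a ∈ maximalIdeal O ^ n
  · refine ⟨n, le_rfl, ⟨1, isUnit_one, ?_⟩, fun j hj => ?_⟩
    · rw [mul_one, Ideal.Quotient.mk_eq_mk_iff_sub_mem]
      obtain ⟨z, hz⟩ := (mem_mpow_iff hϖ n a).mp ha
      exact (mem_mpow_iff hϖ n _).mpr ⟨z - 1, by linear_combination hz⟩
    · simp only [hj, iff_true]
      obtain ⟨z, hz⟩ := (mem_mpow_iff hϖ n a).mp ha
      refine ⟨z * ϖ ^ (n - j), ?_⟩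
      rw [Ideal.Quotient.mk_eq_mk_iff_sub_mem]
      refine (mem_mpow_iff hϖ n _).mpr ⟨0, ?_⟩
      have hpow : ϖ ^ (n - j) * ϖ ^ j = ϖ ^ n := by rw [← pow_add]; congr 1; omega
      linear_combination z * hpow - hz
  · have ha0 : a ≠ 0 := fun h => ha (h ▸ zero_mem _)
    obtain ⟨m, u, hu⟩ := IsDiscreteValuationRing.eq_unit_mul_pow_irreducible ha0 hϖ
    have hmn : m < n := by
      by_contra hmn
      push_neg at hmn
      refine ha ((mem_mpow_iff hϖ n a).mpr ⟨(u : O) * ϖ ^ (m - n), ?_⟩)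
      have hpow : ϖ ^ n * ϖ ^ (m - n) = ϖ ^ m := by rw [← pow_add]; congr 1; omega
      rw [hu]
      linear_combination (-(u : O)) * hpow
    refine ⟨m, hmn.le, ⟨u, u.isUnit, by rw [hu, mul_comm]⟩, fun j hj => ?_⟩
    constructor
    · rintro ⟨y, hy⟩
      by_contra hjm
      push_neg at hjm
      rw [Ideal.Quotient.mk_eq_mk_iff_sub_mem, mem_mpow_iff hϖ] at hy
      obtain ⟨z, hz⟩ := hy
      have hdvd : ϖ ^ (m + 1) ∣ (u : O) * ϖ ^ m := by
        rw [hu] at hz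
        have h1 : ϖ ^ (m + 1) ∣ y * ϖ ^ j :=
          Dvd.dvd.mul_left (pow_dvd_pow ϖ hjm) y
        have h2 : ϖ ^ (m + 1) ∣ ϖ ^ n * z := (pow_dvd_pow ϖ (Nat.succ_le_of_lt hmn)).mul_right z
        have h3 : (u : O) * ϖ ^ m = y * ϖ ^ j - ϖ ^ n * z := by linear_combination -hz
        rw [h3]
        exact dvd_sub h1 h2
      rw [pow_succ, mul_comm (u : O)] at hdvd
      have : ϖ ∣ (u : O) :=
        (mul_dvd_mul_iff_left (pow_ne_zero m hϖ.ne_zero)).mp hdvd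
      exact hϖ.not_isUnit (isUnit_of_dvd_unit this u.isUnit)
    · intro hjm
      refine ⟨(u : O) * ϖ ^ (m - j), ?_⟩
      have hpow : ϖ ^ (m - j) * ϖ ^ j = ϖ ^ m := by rw [← pow_add]; congr 1; omega
      rw [hu]
      exact congrArg _ (by rw [mul_assoc, hpow])

lemma sum_ann [Finite (ResidueField O)] {ϖ : O} (hϖ : Irreducible ϖ) (q : ℕ)
    (hq : Nat.card (ResidueField O) = q) (n : ℕ) :
    ∑ᶠ c : O ⧸ maximalIdeal O ^ n,
        (Nat.card {x : O ⧸ maximalIdeal O ^ n | x * c = 0} : ℚ) =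
      (q : ℚ) ^ n + n * ((q : ℚ) ^ n - (q : ℚ) ^ (n - 1)) := by
  classical
  haveI : Finite (O ⧸ maximalIdeal O ^ n) := (finite_card_quot hϖ n).1
  letI := Fintype.ofFinite (O ⧸ maximalIdeal O ^ n)
  rw [finsum_eq_sum_of_fintype]
  have key : ∀ c : O ⧸ maximalIdeal O ^ n,
      (Nat.card {x : O ⧸ maximalIdeal O ^ n | x * c = 0} : ℚ) =
        1 + ∑ k ∈ Finset.range n, (((q : ℚ) ^ (k + 1) - (q : ℚ) ^ k) *
          if (∃ y : O, Ideal.Quotient.mk (maximalIdeal O ^ n) (y * ϖ ^ (k + 1)) = c)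
            then 1 else 0) := by
    intro c
    obtain ⟨m, hmn, ⟨b, hb, hc⟩, hmem⟩ := exists_val hϖ c
    have hcard : (Nat.card {x : O ⧸ maximalIdeal O ^ n | x * c = 0} : ℚ) = (q : ℚ) ^ m := by
      rw [hc, ann_card hϖ hmn hb, (finite_card_quot hϖ m).2, hq]
      push_cast
      ring
    rw [hcard]
    have hterm : ∀ k ∈ Finset.range n,
        (((q : ℚ) ^ (k + 1) - (q : ℚ) ^ k) *
          if (∃ y : O, Ideal.Quotient.mk (maximalIdeal O ^ n) (y * ϖ ^ (k + 1)) = c)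
            then 1 else 0) =
          if k < m then ((q : ℚ) ^ (k + 1) - (q : ℚ) ^ k) else 0 := by
      intro k hk
      rw [Finset.mem_range] at hk
      rw [hmem (k + 1) hk]
      by_cases h : k < m
      · rw [if_pos (by omega : k + 1 ≤ m), if_pos h, mul_one]
      · rw [if_neg (by omega : ¬ k + 1 ≤ m), if_neg h, mul_zero]
    rw [Finset.sum_congr rfl hterm, ← Finset.sum_filter]
    have hfilt : (Finset.range n).filter (· < m) = Finset.range m := by
      ext k
      simp only [Finset.mem_filter, Finset.mem_range]
      omega
    rw [hfilt, Finset.sum_range_sub (fun k => (q : ℚ) ^ k)]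
    ring
  simp only [key]
  rw [Finset.sum_add_distrib, Finset.sum_const, Finset.card_univ, Finset.sum_comm]
  have hJ : ∀ k ∈ Finset.range n,
      ∑ c : O ⧸ maximalIdeal O ^ n, (((q : ℚ) ^ (k + 1) - (q : ℚ) ^ k) *
          if (∃ y : O, Ideal.Quotient.mk (maximalIdeal O ^ n) (y * ϖ ^ (k + 1)) = c)
            then 1 else 0) = (q : ℚ) ^ n - (q : ℚ) ^ (n - 1) := by
    intro k hk
    rw [Finset.mem_range] at hk
    rw [← Finset.mul_sum, Finset.sum_boole]
    have hcnt : (Finset.univ.filter (fun c : O ⧸ maximalIdeal O ^ n =>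
        ∃ y : O, Ideal.Quotient.mk (maximalIdeal O ^ n) (y * ϖ ^ (k + 1)) = c)).card =
        q ^ (n - (k + 1)) := by
      rw [← Fintype.card_subtype, ← Nat.card_eq_fintype_card,
        Nat.card_congr (equiv_range hϖ (by omega : k + 1 ≤ n)).some,
        (finite_card_quot hϖ (n - (k + 1))).2, hq]
    rw [hcnt]
    have e1 : (q : ℚ) ^ (k + 1) * (q : ℚ) ^ (n - (k + 1)) = (q : ℚ) ^ n := by
      rw [← pow_add]; congr 1; omega
    have e2 : (q : ℚ) ^ k * (q : ℚ) ^ (n - (k + 1)) = (q : ℚ) ^ (n - 1) := by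
      rw [← pow_add]; congr 1; omega
    push_cast
    rw [sub_mul, e1, e2]
  rw [Finset.sum_congr rfl hJ, Finset.sum_const, Finset.card_range,
    ← Nat.card_eq_fintype_card, (finite_card_quot hϖ n).2, hq]
  push_cast
  ring

end AskDiagonalAux

open AskDiagonalAux IsLocalRing Ideal in
/-- The average size of the kernel over the diagonal `d × d` matrices over `O/𝔪^n`
equals `(1 + n(1 - q⁻¹))^d`. -/
theorem ask_diagonal {O : Type*} [CommRing O] [IsDomain O] [IsDiscreteValuationRing O]
    [Finite (IsLocalRing.ResidueField O)]
    (q : ℕ) (hq : Nat.card (IsLocalRing.ResidueField O) = q)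
    (d : ℕ) (hd : 1 ≤ d) (n : ℕ) :
    ask {a : Matrix (Fin d) (Fin d) (O ⧸ IsLocalRing.maximalIdeal O ^ n) |
        ∀ i j : Fin d, i ≠ j → a i j = 0} =
      (1 + (n : ℚ) * (1 - (q : ℚ)⁻¹)) ^ d := by
  classical
  obtain ⟨ϖ, hϖ⟩ := IsDiscreteValuationRing.exists_irreducible O
  set R := O ⧸ maximalIdeal O ^ n with hR
  haveI : Finite R := (finite_card_quot hϖ n).1
  letI : Fintype R := Fintype.ofFinite R
  have hq0 : (q : ℚ) ≠ 0 := by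
    have : 0 < Nat.card (ResidueField O) := Nat.card_pos
    rw [hq] at this
    positivity
  set N : Set (Matrix (Fin d) (Fin d) R) := {a | ∀ i j : Fin d, i ≠ j → a i j = 0} with hN
  let e : N ≃ (Fin d → R) :=
    ⟨fun a => fun i => a.1 i i,
     fun c => ⟨Matrix.diagonal c, fun i j hij => Matrix.diagonal_apply_ne c hij⟩,
     fun a => by
      ext i j
      by_cases hij : i = j
      · subst hij; simp
      · simp [Matrix.diagonal_apply_ne _ hij, (a.2 i j hij).symm],
     fun c => by
      ext i
      simp⟩
  have hcoe : ∀ c : Fin d → R, ((e.symm c : N) : Matrix (Fin d) (Fin d) R) = Matrix.diagonal c :=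
    fun c => rfl
  haveI : Fintype N := Fintype.ofFinite _
  have hcardN : (Nat.card N : ℚ) = ((Nat.card R : ℚ)) ^ d := by
    rw [Nat.card_congr e, Nat.card_fun, Nat.card_eq_fintype_card (α := Fin d),
      Fintype.card_fin]
    push_cast
    ring
  have hker : ∀ c : Fin d → R,
      (Nat.card {x : Fin d → R | Matrix.vecMul x (Matrix.diagonal c) = 0} : ℚ) =
        ∏ i : Fin d, (Nat.card {y : R | y * c i = 0} : ℚ) := by
    intro c
    have hs : {x : Fin d → R | Matrix.vecMul x (Matrix.diagonal c) = 0} =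
        {x : Fin d → R | ∀ i, x i * c i = 0} := by
      ext x
      simp [funext_iff, Matrix.vecMul_diagonal]
    rw [hs]
    have he : (Nat.card {x : Fin d → R | ∀ i, x i * c i = 0}) =
        Nat.card (∀ i : Fin d, {y : R // y * c i = 0}) :=
      Nat.card_congr (Equiv.subtypePiEquivPi (β := fun _ : Fin d => R)
        (p := fun i y => y * c i = 0))
    rw [he, Nat.card_pi]
    push_cast
    rfl
  unfold ask
  rw [finsum_eq_sum_of_fintype, ← Equiv.sum_comp e.symm]
  simp only [hcoe]
  rw [Finset.sum_congr rfl (fun c _ => hker c)]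
  rw [← Fintype.prod_sum (fun (_ : Fin d) (y : R) => (Nat.card {x : R | x * y = 0} : ℚ))]
  have hsum := sum_ann hϖ q hq n
  rw [finsum_eq_sum_of_fintype] at hsum
  rw [Finset.prod_const, Finset.card_univ, Fintype.card_fin, hsum, hcardN,
    (finite_card_quot hϖ n).2, hq]
  rw [← inv_pow, ← mul_pow]
  congr 1
  push_cast
  cases n with
  | zero => simp
  | succ m =>
    have hqn : (q : ℚ) ^ (m + 1) ≠ 0 := pow_ne_zero _ hq0
    have : ((m : ℕ) + 1 - 1 : ℕ) = m := by omega
    rw [this]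
    field_simp
    ring
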